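/- On the star graph with edge length d where γ^d = 1/2 and γ = 1 - 1/√n, the optimal tour value OPT = γ^d·Σ_{i=0}^{√n-1} γ^i + γ^{2d + √n - 1}·Σ_{i=1}^{n - √n} γ^{(2i-1)d} is at least √n/4. -/

import Mathlib

/-- On the star graph with edge length `d`, `γ^d = 1/2` and `γ = 1 - 1/√n`
(`n = m²`, `m ≥ 2`), the optimal tour value is at least
`(1/2)·∑_{i=0}^{m-1} γ^i ≥ m/4 = √n/4`. -/
theorem opt_star_lower_bound (m : ℕ) (hm : 2 ≤ m) (n : ℕ) (hn : n = m^2)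
    (γ d : ℝ) (hγ : γ = 1 - 1/(m:ℝ)) (hdpos : 0 < d) (hd : γ ^ d = 1/2) :
    γ ^ d * ∑ i ∈ Finset.range m, γ ^ i
        + γ ^ (2*d + (m:ℝ) - 1) * ∑ i ∈ Finset.Icc 1 (n - m), γ ^ ((2*(i:ℝ)-1)*d)
      ≥ (1/2) * ∑ i ∈ Finset.range m, γ ^ i ∧
    (1/2) * ∑ i ∈ Finset.range m, γ ^ i ≥ (m : ℝ)/4 := by
  have hm' : (2:ℝ) ≤ (m:ℝ) := by exact_mod_cast hm
  have hmpos : (0:ℝ) < m := by linarith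
  have hinv : 1/(m:ℝ) ≤ 1/2 := by
    apply one_div_le_one_div_of_le <;> linarith
  have hγpos : 0 < γ := by rw [hγ]; linarith
  have hγlt : γ < 1 := by
    rw [hγ]
    have : 0 < 1/(m:ℝ) := by positivity
    linarith
  constructor
  · rw [hd]
    have h1 : 0 ≤ γ ^ (2*d + (m:ℝ) - 1) * ∑ i ∈ Finset.Icc 1 (n - m), γ ^ ((2*(i:ℝ)-1)*d) := by
      apply mul_nonneg (le_of_lt (Real.rpow_pos_of_pos hγpos _))
      apply Finset.sum_nonneg
      intro i _
      exact le_of_lt (Real.rpow_pos_of_pos hγpos _)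
    linarith
  · -- geometric sum = m * (1 - γ^m)
    have hne : γ ≠ 1 := ne_of_lt hγlt
    have hsum : ∑ i ∈ Finset.range m, γ ^ i = (m:ℝ) * (1 - γ ^ m) := by
      rw [geom_sum_eq hne]
      rw [hγ]
      field_simp
      ring
    have hpow : γ ^ m ≤ 1/2 := by
      have hle : γ ≤ Real.exp (-(1/(m:ℝ))) := by
        have := Real.add_one_le_exp (-(1/(m:ℝ)))
        rw [hγ]; linarith
      have h1 : γ ^ m ≤ Real.exp (-(1/(m:ℝ))) ^ m :=
        pow_le_pow_left₀ hγpos.le hle m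
      have h2 : Real.exp (-(1/(m:ℝ))) ^ m = Real.exp (-1) := by
        rw [← Real.exp_nat_mul]
        congr 1
        field_simp
      have h3 : Real.exp (-1) ≤ 1/2 := by
        rw [Real.exp_neg, inv_le_comm₀ (Real.exp_pos 1) (by norm_num)]
        nlinarith [Real.add_one_le_exp (1:ℝ)]
      calc γ ^ m ≤ Real.exp (-(1/(m:ℝ))) ^ m := h1
        _ = Real.exp (-1) := h2
        _ ≤ 1/2 := h3
    rw [hsum]
    nlinarith
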